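/- If G is a bipartite connected graph, f : V(G) → {1, 0, 0̂} a colouring, and G is 2-connected, then a minimum f-respecting simultaneous dominating set of G has size |f⁻¹(1)| + τ(G′), where G′ = (G − f⁻¹(1)) − E(G[f⁻¹(0)]) and τ denotes the minimum vertex cover number; moreover G′ is bipartite, so by König's theorem τ(G′) equals the maximum matching number of G′. -/

import Mathlib

open SimpleGraph

variable {V : Type*}

/-- Number of connected components of a graph. -/
noncomputable def numComponents (G : SimpleGraph V) : ℕ := Nat.card G.ConnectedComponent

/-- A vertex is a cut vertex if its removal increases the number of connected components. -/
def IsCutVertex (G : SimpleGraph V) (v : V) : Prop :=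
  numComponents G < numComponents (G.induce {u | u ≠ v})

/-- `T` is a spanning tree of `G`: a subgraph on all vertices of `G` that is a tree. -/
def IsSpanningTree (G T : SimpleGraph V) : Prop := T ≤ G ∧ T.IsTree

/-- `v` is dominated by `S` in the graph `T`. -/
def DominatedIn (T : SimpleGraph V) (S : Set V) (v : V) : Prop :=
  v ∈ S ∨ ∃ u ∈ S, T.Adj v u

/-- `v` is simultaneously dominated by `S`: dominated in every spanning tree of `G`. -/
def SimDominated (G : SimpleGraph V) (S : Set V) (v : V) : Prop :=
  ∀ T : SimpleGraph V, IsSpanningTree G T → DominatedIn T S v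

/-- `S` is a simultaneous dominating set of `G`. -/
def IsSDSet (G : SimpleGraph V) (S : Set V) : Prop := ∀ v, SimDominated G S v

/-- `C` is a vertex cover of `G`. -/
def _root_.IsVertexCover (G : SimpleGraph V) (C : Set V) : Prop :=
  ∀ ⦃u v : V⦄, G.Adj u v → u ∈ C ∨ v ∈ C

/-- A block of `G`: a maximal vertex set inducing a connected subgraph without cut vertices. -/
def IsBlock (G : SimpleGraph V) (B : Set V) : Prop :=
  B.Nonempty ∧ (G.induce B).Connected ∧ (∀ x, ¬ IsCutVertex (G.induce B) x) ∧
    ∀ B' : Set V, B ⊆ B' → (G.induce B').Connected →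
      (∀ x, ¬ IsCutVertex (G.induce B') x) → B' = B

/-- 2-connected: connected, at least 3 vertices, no cut vertex. -/
def TwoConnected (G : SimpleGraph V) [Fintype V] : Prop :=
  G.Connected ∧ 3 ≤ Fintype.card V ∧ ∀ v, ¬ IsCutVertex G v

/-- Colours 1, 0, 0̂. -/
inductive Col : Type
  | one | zero | zhat
deriving DecidableEq

/-- `S` is an `f`-respecting simultaneous dominating set of `G`. -/
def RespSDS (G : SimpleGraph V) (f : V → Col) (S : Set V) : Prop :=
  (∀ v, f v = Col.one → v ∈ S) ∧ ∀ v, f v = Col.zhat → SimDominated G S v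

/-- A minimum `f`-respecting simultaneous dominating set. -/
def MinRespSDS (G : SimpleGraph V) (f : V → Col) (S : Set V) : Prop :=
  RespSDS G f S ∧ ∀ S' : Set V, RespSDS G f S' → S.ncard ≤ S'.ncard

/-- The graph `(G − f⁻¹(1)) − E(G[f⁻¹(0)])`: delete all vertices of colour 1 (keeping them as
isolated vertices) and all edges between two vertices of colour 0. -/
def Gminus (G : SimpleGraph V) (f : V → Col) : SimpleGraph V where
  Adj u w := G.Adj u w ∧ f u ≠ Col.one ∧ f w ≠ Col.one ∧ ¬(f u = Col.zero ∧ f w = Col.zero)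
  symm := ⟨fun u w ⟨h, h1, h2, h3⟩ => ⟨h.symm, h2, h1, fun ⟨a, b⟩ => h3 ⟨b, a⟩⟩⟩
  loopless := ⟨fun u h => G.loopless.irrefl u h.1⟩

lemma connected_iff_numComponents [Finite V] (G : SimpleGraph V) [Nonempty V] :
    G.Connected ↔ numComponents G = 1 := by
  rw [numComponents, Nat.card_eq_one_iff_unique]
  constructor
  · intro h
    refine ⟨⟨fun a b => ?_⟩, ⟨G.connectedComponentMk (Classical.arbitrary V)⟩⟩
    exact a.ind (fun u => b.ind (fun v => ConnectedComponent.eq.mpr (h.preconnected u v)))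
  · rintro ⟨h, -⟩
    exact Connected.mk (fun u v => ConnectedComponent.eq.mp (Subsingleton.elim _ _))

lemma exists_spanning_tree [Finite V] (G : SimpleGraph V) (hG : G.Connected) :
    ∃ T : SimpleGraph V, T ≤ G ∧ T.IsTree := by
  classical
  have : ∃ n, ∃ H : SimpleGraph V, H ≤ G ∧ H.Connected ∧ Nat.card H.edgeSet = n :=
    ⟨_, G, le_refl _, hG, rfl⟩
  obtain ⟨H, hHG, hHc, hHcard⟩ := Nat.sInf_mem (s := {n | ∃ H : SimpleGraph V,
    H ≤ G ∧ H.Connected ∧ Nat.card H.edgeSet = n}) this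
  refine ⟨H, hHG, hHc, ?_⟩
  rw [isAcyclic_iff_forall_adj_isBridge]
  intro v w hvw
  by_contra hbr
  rw [isBridge_iff] at hbr
  have h := hbr
  rw [not_not, reachable_delete_edges_iff_exists_walk] at h
  obtain ⟨p, hp⟩ := h
  set H' := H \ fromEdgeSet {s(v, w)} with hH'
  have hle : H' ≤ H := sdiff_le
  have hreach : ∀ ⦃a b : V⦄, H.Reachable a b → H'.Reachable a b := by
    intro a b hab
    obtain ⟨q⟩ := hab
    induction q with
    | nil => exact Reachable.refl _
    | @cons x y z hxy q ih =>
      refine Reachable.trans ?_ ih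
      by_cases he : s(x, y) = s(v, w)
      · have hvr : H'.Reachable v w := by
          refine ⟨p.transfer _ fun e ep => ?_⟩
          rw [hH', edgeSet_sdiff, edgeSet_fromEdgeSet]
          refine ⟨p.edges_subset_edgeSet ep, ?_⟩
          simp only [Set.mem_diff, Set.mem_singleton_iff, Set.mem_setOf_eq]
          rintro ⟨rfl, -⟩
          exact hp ep
        rw [Sym2.eq_iff] at he
        rcases he with ⟨rfl, rfl⟩ | ⟨rfl, rfl⟩
        · exact hvr
        · exact hvr.symm
      · refine Adj.reachable ?_
        rw [hH', sdiff_adj]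
        refine ⟨hxy, fun hc => he ?_⟩
        rw [fromEdgeSet_adj] at hc
        simpa using hc.1
  have hH'c : H'.Connected := by
    have := hHc.nonempty
    exact Connected.mk (fun a b => hreach (hHc.preconnected a b))
  have hssub : H'.edgeSet ⊂ H.edgeSet := by
    rw [hH', edgeSet_sdiff, edgeSet_fromEdgeSet]
    constructor
    · intro e he; exact he.1
    · intro hsub
      have : s(v, w) ∈ H.edgeSet := hvw
      have h2 := hsub this
      simp only [Set.mem_diff, Set.mem_singleton_iff, Set.mem_setOf_eq, Sym2.isDiag_iff_proj_eq,
        not_and, not_not] at h2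
      exact hvw.ne (h2.2 trivial)
  have hlt : Nat.card H'.edgeSet < Nat.card H.edgeSet := by
    have := Set.ncard_lt_ncard hssub (Set.toFinite _)
    simpa [Nat.card_coe_set_eq] using this
  have := Nat.sInf_le (show Nat.card H'.edgeSet ∈ {n | ∃ H : SimpleGraph V,
    H ≤ G ∧ H.Connected ∧ Nat.card H.edgeSet = n} from ⟨H', hle.trans hHG, hH'c, rfl⟩)
  omega

lemma delete_connected [Fintype V] {G : SimpleGraph V} (h2 : TwoConnected G) (v : V) :
    (G.induce {u | u ≠ v}).Connected := by
  obtain ⟨hc, hcard, hcut⟩ := h2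
  have hne : Nonempty {u | u ≠ v} := by
    have : 1 < Fintype.card V := by omega
    obtain ⟨w, hw⟩ := Fintype.exists_ne_of_one_lt_card this v
    exact ⟨⟨w, hw⟩⟩
  have hV : Nonempty V := hc.nonempty
  have h1 : numComponents G = 1 := (connected_iff_numComponents G).mp hc
  have h2' := hcut v
  rw [IsCutVertex, h1, not_lt] at h2'
  haveI := hne
  haveI : Nonempty (G.induce {u | u ≠ v}).ConnectedComponent :=
    ⟨(G.induce {u | u ≠ v}).connectedComponentMk (Classical.arbitrary _)⟩
  have hpos : 0 < numComponents (G.induce {u | u ≠ v}) := by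
    rw [numComponents]
    exact Nat.card_pos
  rw [connected_iff_numComponents]
  omega

lemma exists_spanning_tree_leaf [Fintype V] {G : SimpleGraph V} (h2 : TwoConnected G)
    {v u : V} (hadj : G.Adj v u) :
    ∃ T : SimpleGraph V, IsSpanningTree G T ∧ ∀ w, T.Adj v w → w = u := by
  classical
  -- K : G with all edges at v removed except v-u
  set K : SimpleGraph V := {
    Adj := fun a b => G.Adj a b ∧ (a = v → b = u) ∧ (b = v → a = u)
    symm := by
      refine ⟨?_⟩
      rintro a b ⟨h, h1, h2⟩
      exact ⟨h.symm, h2, h1⟩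
    loopless := ⟨fun a h => G.loopless.irrefl a h.1⟩ } with hK
  have hKle : K ≤ G := fun a b h => h.1
  have hKadj : ∀ a b, K.Adj a b ↔ G.Adj a b ∧ (a = v → b = u) ∧ (b = v → a = u) := by
    intro a b; rfl
  have hvu : v ≠ u := hadj.ne
  have hKconn : K.Connected := by
    have hdel := delete_connected h2 v
    have hmap : ∀ x : {w | w ≠ v}, K.Reachable x v := by
      intro x
      have hre : (G.induce {w | w ≠ v}).Reachable x ⟨u, fun h => hvu h.symm⟩ :=
        hdel.preconnected _ _
      let hhom : G.induce {w | w ≠ v} →g K :=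
        ⟨Subtype.val, fun {a b} hab =>
          ⟨hab, fun h => absurd h a.2, fun h => absurd h b.2⟩⟩
      have : K.Reachable x u := hre.map hhom
      refine this.trans (Adj.reachable ?_).symm
      exact ⟨hadj, fun _ => rfl, fun h => absurd h.symm hvu⟩
    haveI : Nonempty V := ⟨v⟩
    refine Connected.mk (fun a b => ?_)
    have key : ∀ x : V, K.Reachable x v := by
      intro x
      by_cases hx : x = v
      · rw [hx]
      · exact hmap ⟨x, hx⟩
    exact (key a).trans (key b).symm
  obtain ⟨T, hTK, hTtree⟩ := exists_spanning_tree K hKconn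
  refine ⟨T, ⟨fun a b h => hKle (hTK h), hTtree⟩, fun w hw => ?_⟩
  exact (hTK hw).2.1 rfl

lemma simDominated_iff [Fintype V] {G : SimpleGraph V} (h2 : TwoConnected G)
    (S : Set V) (v : V) :
    SimDominated G S v ↔ v ∈ S ∨ ∀ w, G.Adj v w → w ∈ S := by
  constructor
  · intro h
    by_cases hv : v ∈ S
    · exact Or.inl hv
    refine Or.inr (fun w hw => ?_)
    obtain ⟨T, hT, hleaf⟩ := exists_spanning_tree_leaf h2 hw
    rcases h T hT with h' | ⟨x, hx, hadj⟩
    · exact absurd h' hv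
    · rwa [hleaf x hadj] at hx
  · rintro (hv | hN) T ⟨hTG, hTtree⟩
    · exact Or.inl hv
    · right
      have : ∃ w, w ≠ v := by
        have h3 := h2.2.1
        have : 1 < Fintype.card V := by omega
        exact Fintype.exists_ne_of_one_lt_card this v
      obtain ⟨w, hwv⟩ := this
      obtain ⟨p⟩ := hTtree.isConnected.preconnected v w
      cases p with
      | nil => exact absurd rfl hwv.symm
      | cons h q => exact ⟨_, hN _ (hTG h), h⟩

lemma part1 [Fintype V] (G : SimpleGraph V) (h2 : TwoConnected G) (f : V → Col) :
    sInf {n : ℕ | ∃ S : Set V, RespSDS G f S ∧ S.ncard = n} =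
      (f ⁻¹' {Col.one}).ncard +
        sInf {n : ℕ | ∃ C : Set V, _root_.IsVertexCover (Gminus G f) C ∧ C.ncard = n} := by
  classical
  set k := (f ⁻¹' {Col.one}).ncard with hk
  set A := {n : ℕ | ∃ S : Set V, RespSDS G f S ∧ S.ncard = n} with hA
  set B := {n : ℕ | ∃ C : Set V, _root_.IsVertexCover (Gminus G f) C ∧ C.ncard = n} with hB
  have hAne : A.Nonempty := by
    refine ⟨(Set.univ : Set V).ncard, Set.univ, ⟨fun v _ => Set.mem_univ v, ?_⟩, rfl⟩
    intro v _ T _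
    exact Or.inl (Set.mem_univ v)
  have hBne : B.Nonempty := by
    exact ⟨(Set.univ : Set V).ncard, Set.univ, fun u w _ => Or.inl (Set.mem_univ u), rfl⟩
  -- from cover to RespSDS
  have claim1 : ∀ C : Set V, _root_.IsVertexCover (Gminus G f) C →
      RespSDS G f (f ⁻¹' {Col.one} ∪ C) ∧
      (f ⁻¹' {Col.one} ∪ C).ncard ≤ k + C.ncard := by
    intro C hC
    refine ⟨⟨fun v hv => Or.inl hv, fun v hv => ?_⟩,
      Set.ncard_union_le _ _⟩
    rw [simDominated_iff h2]
    by_cases hvC : v ∈ C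
    · exact Or.inl (Or.inr hvC)
    refine Or.inr (fun w hw => ?_)
    by_cases hwone : f w = Col.one
    · exact Or.inl hwone
    · have hadj : (Gminus G f).Adj w v := by
        refine ⟨hw.symm, hwone, by simp [hv], fun ⟨_, hzv⟩ => by simp [hv] at hzv⟩
      rcases hC hadj with h | h
      · exact Or.inr h
      · exact absurd h hvC
  -- from RespSDS to cover
  have claim2 : ∀ S : Set V, RespSDS G f S →
      _root_.IsVertexCover (Gminus G f) (S \ f ⁻¹' {Col.one}) ∧
      S.ncard = k + (S \ f ⁻¹' {Col.one}).ncard := by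
    intro S hS
    have hsub : f ⁻¹' {Col.one} ⊆ S := fun v hv => hS.1 v hv
    constructor
    · intro a b hab
      obtain ⟨hGab, ha1, hb1, hnz⟩ := hab
      have key : ∀ x y : V, G.Adj x y → f x = Col.zhat → f y ≠ Col.one →
          x ∈ S \ f ⁻¹' {Col.one} ∨ y ∈ S \ f ⁻¹' {Col.one} := by
        intro x y hxy hx hy1
        have := (simDominated_iff h2 S x).mp (hS.2 x hx)
        rcases this with h | h
        · exact Or.inl ⟨h, by simp [hx]⟩
        · exact Or.inr ⟨h y hxy, by simp [hy1]⟩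
      have : f a = Col.zhat ∨ f b = Col.zhat := by
        rcases ha : f a with _ | _ | _ <;> rcases hb : f b with _ | _ | _ <;>
          simp_all
      rcases this with h | h
      · exact key a b hGab h hb1
      · exact (key b a hGab.symm h ha1).symm
    · have : S = f ⁻¹' {Col.one} ∪ (S \ f ⁻¹' {Col.one}) :=
        (Set.union_diff_cancel hsub).symm
      rw [hk]
      conv_lhs => rw [this]
      rw [Set.ncard_union_eq (Set.disjoint_sdiff_right) (Set.toFinite _) (Set.toFinite _)]
  apply le_antisymm
  · obtain ⟨C, hC, hCcard⟩ := Nat.sInf_mem hBne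
    obtain ⟨hresp, hcard⟩ := claim1 C hC
    calc sInf A ≤ (f ⁻¹' {Col.one} ∪ C).ncard := Nat.sInf_le (show _ ∈ A from ⟨_, hresp, rfl⟩)
    _ ≤ k + C.ncard := hcard
    _ = k + sInf B := by rw [hCcard]
  · obtain ⟨S, hS, hScard⟩ := Nat.sInf_mem hAne
    obtain ⟨hcov, hcard⟩ := claim2 S hS
    calc k + sInf B ≤ k + (S \ f ⁻¹' {Col.one}).ncard :=
          Nat.add_le_add_left (Nat.sInf_le (show _ ∈ B from ⟨_, hcov, rfl⟩)) k
    _ = S.ncard := hcard.symm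
    _ = sInf A := hScard

lemma matching_edge_unique {H : SimpleGraph V} {M : H.Subgraph} (hM : M.IsMatching)
    {v : V} {e₁ e₂ : Sym2 V} (h1 : e₁ ∈ M.edgeSet) (h2 : e₂ ∈ M.edgeSet)
    (hv1 : v ∈ e₁) (hv2 : v ∈ e₂) : e₁ = e₂ := by
  obtain ⟨w₁, rfl⟩ := Sym2.mem_iff_exists.mp hv1
  obtain ⟨w₂, rfl⟩ := Sym2.mem_iff_exists.mp hv2
  rw [Subgraph.mem_edgeSet] at h1 h2
  have hv : v ∈ M.verts := M.edge_vert h1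
  obtain ⟨w, -, huniq⟩ := hM hv
  rw [huniq w₁ h1, huniq w₂ h2]

lemma matching_le_cover [Finite V] {H : SimpleGraph V} {M : H.Subgraph} (hM : M.IsMatching)
    {C : Set V} (hC : _root_.IsVertexCover H C) : Nat.card M.edgeSet ≤ C.ncard := by
  classical
  have hch : ∀ e : M.edgeSet, ∃ v, v ∈ C ∧ v ∈ (e : Sym2 V) := by
    rintro ⟨e, he⟩
    induction e with
    | h a b =>
      rw [Subgraph.mem_edgeSet] at he
      rcases hC (M.adj_sub he) with h | h
      · exact ⟨a, h, Sym2.mem_mk_left a b⟩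
      · exact ⟨b, h, Sym2.mem_mk_right a b⟩
  choose F hFC hFmem using hch
  have hinj : Function.Injective (fun e : M.edgeSet => (⟨F e, hFC e⟩ : C)) := by
    intro e₁ e₂ h
    simp only [Subtype.mk_eq_mk] at h
    exact Subtype.ext (matching_edge_unique hM e₁.2 e₂.2 (hFmem e₁) (h ▸ hFmem e₂))
  calc Nat.card M.edgeSet ≤ Nat.card C := Nat.card_le_card_of_injective _ hinj
  _ = C.ncard := Nat.card_coe_set_eq C

lemma matching_verts_card [Finite V] {H : SimpleGraph V} {M : H.Subgraph}
    (hM : M.IsMatching) : M.verts.ncard = 2 * Nat.card M.edgeSet := by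
  classical
  have := Fintype.ofFinite V
  have hcard : Nat.card M.verts = Nat.card (Σ e : M.edgeSet, {v : M.verts // hM.toEdge v = e}) :=
    (Nat.card_congr (Equiv.sigmaFiberEquiv hM.toEdge)).symm
  have hfiber : ∀ e : M.edgeSet, Nat.card {v : M.verts // hM.toEdge v = e} = 2 := by
    rintro ⟨e, he⟩
    induction e with
    | h a b =>
      have hadj : M.Adj a b := Subgraph.mem_edgeSet.mp he
      have hne : a ≠ b := (M.adj_sub hadj).ne
      have ha : a ∈ M.verts := M.edge_vert hadj
      have hb : b ∈ M.verts := M.edge_vert hadj.symm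
      have key : ∀ v : {v : M.verts // hM.toEdge v = ⟨s(a,b), he⟩},
          ((v : M.verts) : V) ∈ ({a, b} : Set V) := by
        rintro ⟨⟨v, hv⟩, hve⟩
        obtain ⟨w, hw, -⟩ := hM hv
        have hed := hM.toEdge_eq_of_adj hw
        rw [hve] at hed
        have hvm : v ∈ s(a, b) := by
          have h7 : s(a, b) = s(v, w) := by
            simpa using congrArg Subtype.val hed
          rw [h7]
          exact Sym2.mem_mk_left v w
        simpa using hvm
      have hinj : Function.Injective
          (fun v : {v : M.verts // hM.toEdge v = ⟨s(a,b), he⟩} =>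
            (⟨((v : M.verts) : V), key v⟩ : ({a, b} : Set V))) := by
        rintro ⟨⟨x, hx⟩, hxe⟩ ⟨⟨y, hy⟩, hye⟩ h
        simp only [Subtype.mk_eq_mk] at h ⊢
        exact h
      have hsurj : Function.Surjective
          (fun v : {v : M.verts // hM.toEdge v = ⟨s(a,b), he⟩} =>
            (⟨((v : M.verts) : V), key v⟩ : ({a, b} : Set V))) := by
        rintro ⟨x, hx⟩
        simp only [Set.mem_insert_iff, Set.mem_singleton_iff] at hx
        rcases hx with rfl | rfl
        · exact ⟨⟨⟨x, ha⟩, hM.toEdge_eq_of_adj hadj⟩, rfl⟩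
        · refine ⟨⟨⟨x, hb⟩, ?_⟩, rfl⟩
          rw [hM.toEdge_eq_of_adj hadj.symm]
          simp [Sym2.eq_swap]
      have : Nat.card {v : M.verts // hM.toEdge v = ⟨s(a,b), he⟩} =
          Nat.card ({a, b} : Set V) :=
        Nat.card_congr (Equiv.ofBijective _ ⟨hinj, hsurj⟩)
      rw [this, Nat.card_coe_set_eq, Set.ncard_pair hne]
  haveI : Fintype M.edgeSet := Fintype.ofFinite _
  haveI : ∀ e : M.edgeSet, Fintype {v : M.verts // hM.toEdge v = e} :=
    fun e => Fintype.ofFinite _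
  rw [← Nat.card_coe_set_eq, hcard, Nat.card_eq_fintype_card, Fintype.card_sigma]
  have hfib' : ∀ e : M.edgeSet, Fintype.card {v : M.verts // hM.toEdge v = e} = 2 :=
    fun e => by rw [← Nat.card_eq_fintype_card]; exact hfiber e
  rw [Finset.sum_congr rfl (fun e _ => hfib' e), Finset.sum_const, smul_eq_mul,
    Nat.card_eq_fintype_card]
  rw [mul_comm]
  rfl

lemma fin2_cases (a : Fin 2) : a = 0 ∨ a = 1 := by omega

lemma hall_side [Fintype V] {H : SimpleGraph V} {C₀ : Set V}
    (hC₀ : _root_.IsVertexCover H C₀)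
    (hmin : ∀ C : Set V, _root_.IsVertexCover H C → C₀.ncard ≤ C.ncard)
    (c : H.Coloring (Fin 2)) (i : Fin 2)
    (X : Finset V) (hX : ∀ x ∈ X, x ∈ C₀ ∧ c x = i) :
    ∃ g : {x // x ∈ X} → V, Function.Injective g ∧
      ∀ x : {x // x ∈ X}, H.Adj (x : V) (g x) ∧ g x ∉ C₀ ∧ c (g x) ≠ i := by
  classical
  set t : {x // x ∈ X} → Finset V :=
    fun x => Finset.univ.filter (fun w => H.Adj x w ∧ w ∉ C₀) with ht
  have hall : ∀ s : Finset {x // x ∈ X}, s.card ≤ (s.biUnion t).card := by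
    intro s
    by_contra hlt
    push_neg at hlt
    set img : Finset V := s.image Subtype.val with himg
    have himgcard : img.card = s.card := Finset.card_image_of_injective s Subtype.val_injective
    have himgsub : (img : Set V) ⊆ C₀ := by
      intro v hv
      simp only [himg, Finset.coe_image, Set.mem_image, Finset.mem_coe] at hv
      obtain ⟨x, -, rfl⟩ := hv
      exact (hX x x.2).1
    have himgX : ∀ v ∈ img, c v = i := by
      intro v hv
      simp only [himg, Finset.mem_image] at hv
      obtain ⟨x, -, rfl⟩ := hv
      exact (hX x x.2).2
    set C' : Set V := (C₀ \ ↑img) ∪ ↑(s.biUnion t) with hC'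
    have key : ∀ u w : V, H.Adj u w → u ∈ C₀ → u ∈ C' ∨ w ∈ C' := by
      intro u w hadj huC
      by_cases hui : u ∈ img
      · have hcw : c w ≠ i := by
          intro hwi
          exact c.valid hadj ((himgX u hui).trans hwi.symm)
        by_cases hwC : w ∈ C₀
        · refine Or.inr (Or.inl ⟨hwC, fun h => hcw (himgX w (Finset.mem_coe.mp h))⟩)
        · refine Or.inr (Or.inr ?_)
          simp only [himg, Finset.mem_image] at hui
          obtain ⟨x, hxs, rfl⟩ := hui
          simp only [Finset.mem_coe, Finset.mem_biUnion]
          exact ⟨x, hxs, by simp [ht, hadj, hwC]⟩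
      · exact Or.inl (Or.inl ⟨huC, fun h => hui (Finset.mem_coe.mp h)⟩)
    have hcov : _root_.IsVertexCover H C' := by
      intro u w hadj
      rcases hC₀ hadj with h | h
      · exact key u w hadj h
      · exact (key w u hadj.symm h).symm
    have hcard : C'.ncard < C₀.ncard := by
      have h1 : (C₀ \ (img : Set V)).ncard = C₀.ncard - img.card := by
        rw [Set.ncard_diff himgsub (Set.toFinite _), Set.ncard_coe_finset]
      have h2 : C'.ncard ≤ (C₀ \ (img : Set V)).ncard + (s.biUnion t).card := by
        rw [hC']
        refine le_trans (Set.ncard_union_le _ _) ?_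
        rw [Set.ncard_coe_finset]
      have h3 : img.card ≤ C₀.ncard := by
        rw [← Set.ncard_coe_finset]
        exact Set.ncard_le_ncard himgsub (Set.toFinite _)
      omega
    exact absurd (hmin C' hcov) (by omega)
  obtain ⟨g, hginj, hgt⟩ := Finset.all_card_le_biUnion_card_iff_exists_injective t |>.mp hall
  refine ⟨g, hginj, fun x => ?_⟩
  have := hgt x
  simp only [ht, Finset.mem_filter, Finset.mem_univ, true_and] at this
  exact ⟨this.1, this.2, fun hgi => c.valid this.1 ((hX x x.2).2.trans hgi.symm)⟩

lemma equiv_range {X : Finset V} (g : {x // x ∈ X} → V) (hginj : Function.Injective g) :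
    ∃ e : ((X : Set V) : Type _) ≃ (Set.range g : Set V),
      ∀ v, (e v : V) = g ⟨v.1, v.2⟩ := by
  refine ⟨Equiv.ofBijective (fun v => ⟨g ⟨v.1, v.2⟩, ⟨⟨v.1, v.2⟩, rfl⟩⟩) ⟨?_, ?_⟩, fun v => rfl⟩
  · intro a b h
    have h2 := hginj (Subtype.ext_iff.mp h)
    exact Subtype.ext (congrArg Subtype.val h2)
  · rintro ⟨x, a, rfl⟩
    exact ⟨⟨a.1, a.2⟩, rfl⟩

lemma konig_hard [Fintype V] (H : SimpleGraph V) (hcol : H.Colorable 2) :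
    ∃ M : H.Subgraph, M.IsMatching ∧ Nat.card M.edgeSet =
      sInf {n : ℕ | ∃ C : Set V, _root_.IsVertexCover H C ∧ C.ncard = n} := by
  classical
  obtain ⟨c⟩ := hcol
  set B := {n : ℕ | ∃ C : Set V, _root_.IsVertexCover H C ∧ C.ncard = n} with hB
  have hBne : B.Nonempty :=
    ⟨(Set.univ : Set V).ncard, Set.univ, fun u w _ => Or.inl (Set.mem_univ u), rfl⟩
  obtain ⟨C₀, hC₀, hC₀card⟩ := Nat.sInf_mem hBne
  have hmin : ∀ C : Set V, _root_.IsVertexCover H C → C₀.ncard ≤ C.ncard := by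
    intro C hC
    rw [hC₀card]
    exact Nat.sInf_le ⟨C, hC, rfl⟩
  set F : Finset V := (Set.toFinite C₀).toFinset with hF
  have hFmem : ∀ v, v ∈ F ↔ v ∈ C₀ := fun v => Set.Finite.mem_toFinset _
  have hFcard : F.card = C₀.ncard := (Set.ncard_eq_toFinset_card _ _).symm
  set X : Finset V := F.filter (fun v => c v = 0) with hXdef
  set Y : Finset V := F.filter (fun v => ¬ c v = 0) with hYdef
  have hXYcard : X.card + Y.card = F.card :=
    Finset.card_filter_add_card_filter_not _
  have hXprop : ∀ x ∈ X, x ∈ C₀ ∧ c x = 0 := by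
    intro x hx
    rw [hXdef, Finset.mem_filter] at hx
    exact ⟨(hFmem x).mp hx.1, hx.2⟩
  have hYprop : ∀ y ∈ Y, y ∈ C₀ ∧ c y = 1 := by
    intro y hy
    rw [hYdef, Finset.mem_filter] at hy
    rcases fin2_cases (c y) with h | h
    · exact absurd h hy.2
    · exact ⟨(hFmem y).mp hy.1, h⟩
  obtain ⟨g, hginj, hg⟩ := hall_side hC₀ hmin c 0 X hXprop
  obtain ⟨g', hg'inj, hg'⟩ := hall_side hC₀ hmin c 1 Y hYprop
  -- basic membership facts
  have hXc : ∀ v ∈ (X : Set V), v ∈ C₀ ∧ c v = 0 := fun v hv => hXprop v (Finset.mem_coe.mp hv)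
  have hYc : ∀ v ∈ (Y : Set V), v ∈ C₀ ∧ c v = 1 := fun v hv => hYprop v (Finset.mem_coe.mp hv)
  have hrg : ∀ v ∈ Set.range g, v ∉ C₀ ∧ c v ≠ 0 := by
    rintro v ⟨x, rfl⟩; exact ⟨(hg x).2.1, (hg x).2.2⟩
  have hrg' : ∀ v ∈ Set.range g', v ∉ C₀ ∧ c v ≠ 1 := by
    rintro v ⟨y, rfl⟩; exact ⟨(hg' y).2.1, (hg' y).2.2⟩
  -- matchings on each side
  have hd1 : Disjoint (X : Set V) (Set.range g) := by
    rw [Set.disjoint_left]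
    intro v hv hv'
    exact (hrg v hv').1 (hXc v hv).1
  have hd2 : Disjoint (Y : Set V) (Set.range g') := by
    rw [Set.disjoint_left]
    intro v hv hv'
    exact (hrg' v hv').1 (hYc v hv).1
  obtain ⟨e1, he1⟩ := equiv_range g hginj
  obtain ⟨e2, he2⟩ := equiv_range g' hg'inj
  obtain ⟨M₁, hM₁verts, hM₁⟩ := Subgraph.IsMatching.exists_of_disjoint_sets_of_equiv hd1 e1
    (fun v => by rw [he1 v]; exact (hg _).1)
  obtain ⟨M₂, hM₂verts, hM₂⟩ := Subgraph.IsMatching.exists_of_disjoint_sets_of_equiv hd2 e2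
    (fun v => by rw [he2 v]; exact (hg' _).1)
  have hsupdisj : Disjoint M₁.support M₂.support := by
    rw [hM₁.support_eq_verts, hM₂.support_eq_verts, hM₁verts, hM₂verts]
    rw [Set.disjoint_left]
    rintro v (hv | hv) (hw | hw)
    · exact absurd (hYc v hw).2 (by simp [(hXc v hv).2])
    · exact (hrg' v hw).1 (hXc v hv).1
    · exact (hrg v hv).1 (hYc v hw).1
    · rcases fin2_cases (c v) with h | h
      · exact (hrg v hv).2 h
      · exact (hrg' v hw).2 h
  have hMmatch : (M₁ ⊔ M₂).IsMatching := hM₁.sup hM₂ hsupdisj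
  refine ⟨M₁ ⊔ M₂, hMmatch, ?_⟩
  -- counting
  have hrgcard : (Set.range g).ncard = X.card := by
    rw [← Nat.card_coe_set_eq, Nat.card_range_of_injective hginj,
      Nat.card_eq_fintype_card, Fintype.card_coe]
  have hrg'card : (Set.range g').ncard = Y.card := by
    rw [← Nat.card_coe_set_eq, Nat.card_range_of_injective hg'inj,
      Nat.card_eq_fintype_card, Fintype.card_coe]
  have hvcard : (M₁ ⊔ M₂).verts.ncard = 2 * C₀.ncard := by
    rw [Subgraph.verts_sup, hM₁verts, hM₂verts]
    have hd12 : Disjoint ((X : Set V) ∪ Set.range g) ((Y : Set V) ∪ Set.range g') := by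
      rw [← hM₁verts, ← hM₂verts, ← hM₁.support_eq_verts, ← hM₂.support_eq_verts]
      exact hsupdisj
    rw [Set.ncard_union_eq hd12 (Set.toFinite _) (Set.toFinite _),
      Set.ncard_union_eq hd1 (Set.toFinite _) (Set.toFinite _),
      Set.ncard_union_eq hd2 (Set.toFinite _) (Set.toFinite _),
      Set.ncard_coe_finset, Set.ncard_coe_finset, hrgcard, hrg'card]
    omega
  have := matching_verts_card hMmatch
  rw [hvcard] at this
  omega

lemma konig [Fintype V] (H : SimpleGraph V) (hcol : H.Colorable 2) :
    sInf {n : ℕ | ∃ C : Set V, _root_.IsVertexCover H C ∧ C.ncard = n} =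
      sSup {n : ℕ | ∃ M : H.Subgraph, M.IsMatching ∧ Nat.card M.edgeSet = n} := by
  classical
  set B := {n : ℕ | ∃ C : Set V, _root_.IsVertexCover H C ∧ C.ncard = n} with hB
  set Ms := {n : ℕ | ∃ M : H.Subgraph, M.IsMatching ∧ Nat.card M.edgeSet = n} with hMs
  have hBne : B.Nonempty :=
    ⟨(Set.univ : Set V).ncard, Set.univ, fun u w _ => Or.inl (Set.mem_univ u), rfl⟩
  have hub : ∀ n ∈ Ms, n ≤ sInf B := by
    rintro n ⟨M, hM, rfl⟩
    obtain ⟨C₀, hC₀, hC₀card⟩ := Nat.sInf_mem hBne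
    rw [← hC₀card]
    exact matching_le_cover hM hC₀
  have hMsne : Ms.Nonempty := by
    refine ⟨0, ⊥, ?_, ?_⟩
    · intro v hv
      simp only [Subgraph.verts_bot, Set.mem_empty_iff_false] at hv
    · simp
  obtain ⟨M₀, hM₀, hM₀card⟩ := konig_hard H hcol
  apply le_antisymm
  · exact le_csSup ⟨sInf B, fun n hn => hub n hn⟩ ⟨M₀, hM₀, hM₀card⟩
  · exact csSup_le hMsne hub

/-- In a bipartite connected 2-connected graph `G` with colouring `f`, the
minimum size of an `f`-respecting SD-set is `|f⁻¹(1)| + τ(G′)` with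
`G′ = (G − f⁻¹(1)) − E(G[f⁻¹(0)])`; moreover `G′` is bipartite, and by König's theorem
`τ(G′)` equals the maximum matching number of `G′`. -/
theorem stmt19 [Fintype V] (G : SimpleGraph V) (hbip : G.Colorable 2) (hconn : G.Connected)
    (h2 : TwoConnected G) (f : V → Col) :
    sInf {n : ℕ | ∃ S : Set V, RespSDS G f S ∧ S.ncard = n} =
      (f ⁻¹' {Col.one}).ncard +
        sInf {n : ℕ | ∃ C : Set V, _root_.IsVertexCover (Gminus G f) C ∧ C.ncard = n} ∧
    (Gminus G f).Colorable 2 ∧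
    sInf {n : ℕ | ∃ C : Set V, _root_.IsVertexCover (Gminus G f) C ∧ C.ncard = n} =
      sSup {n : ℕ | ∃ M : (Gminus G f).Subgraph, M.IsMatching ∧ Nat.card M.edgeSet = n} := by
  have hle : Gminus G f ≤ G := fun a b h => h.1
  have hcol : (Gminus G f).Colorable 2 := Colorable.mono_left hle hbip
  exact ⟨part1 G h2 f, hcol, konig _ hcol⟩
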